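/- Let N ≥ 2 and let u be a C² function on an open set U ⊆ ℝ^N that is N-harmonic, i.e., div(|∇u|^{N-2}∇u) = 0 on U (assume ∇u ≠ 0 on U). Then the vector field X(x) = N ⟨x, ∇u(x)⟩ |∇u(x)|^{N-2} ∇u(x) − |∇u(x)|^N x is divergence-free on U. -/

import Mathlib

open Real
open scoped RealInnerProductSpace

/-- Divergence of a vector field on Euclidean space. -/
noncomputable def ediv {N : ℕ} (X : EuclideanSpace ℝ (Fin N) → EuclideanSpace ℝ (Fin N))
    (x : EuclideanSpace ℝ (Fin N)) : ℝ :=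
  ∑ i, ⟪fderiv ℝ X x (EuclideanSpace.single i 1), EuclideanSpace.single i 1⟫

open InnerProductSpace

lemma sum_clm_single {N : ℕ} (L : EuclideanSpace ℝ (Fin N) →L[ℝ] ℝ)
    (w : EuclideanSpace ℝ (Fin N)) :
    ∑ i, L (EuclideanSpace.single i 1) * w i = L w := by
  have hw : w = ∑ i, w i • EuclideanSpace.single i (1:ℝ) := by
    ext j
    rw [WithLp.ofLp_sum, Finset.sum_apply]
    simp [EuclideanSpace.single_apply]
  conv_rhs => rw [hw]
  rw [map_sum]
  simp [mul_comm]

lemma norm_rpow_inner {N : ℕ} (v : EuclideanSpace ℝ (Fin N)) (s : ℝ) :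
    ‖v‖ ^ s = (⟪v, v⟫ : ℝ) ^ (s/2) := by
  rw [real_inner_self_eq_norm_sq, ← Real.rpow_natCast ‖v‖ 2, ← Real.rpow_mul (norm_nonneg v)]
  congr 1
  push_cast
  ring

theorem stmt7 {N : ℕ} (hN : 2 ≤ N) (U : Set (EuclideanSpace ℝ (Fin N))) (hU : IsOpen U)
    (u : EuclideanSpace ℝ (Fin N) → ℝ) (hu : ContDiffOn ℝ 2 u U)
    (hgrad : ∀ x ∈ U, gradient u x ≠ 0)
    (hharm : ∀ x ∈ U,
      ediv (fun y => ‖gradient u y‖ ^ ((N : ℝ) - 2) • gradient u y) x = 0) :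
    ∀ x ∈ U,
      ediv (fun y =>
          ((N : ℝ) * ⟪y, gradient u y⟫ * ‖gradient u y‖ ^ ((N : ℝ) - 2)) • gradient u y -
            (‖gradient u y‖ ^ (N : ℝ)) • y) x = 0 := by
  intro x hx
  classical
  have hcd : ContDiffAt ℝ 2 u x := hu.contDiffAt (hU.mem_nhds hx)
  have hdu : DifferentiableAt ℝ (fderiv ℝ u) x :=
    (hcd.fderiv_right (m := 1) (by norm_num)).differentiableAt (by norm_num)
  set F2 := fderiv ℝ (fderiv ℝ u) x with hF2
  obtain ⟨G, hg, hGF⟩ : ∃ G : EuclideanSpace ℝ (Fin N) →L[ℝ] EuclideanSpace ℝ (Fin N),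
      HasFDerivAt (fun y => gradient u y) G x ∧ ∀ v w, ⟪G v, w⟫ = F2 v w := by
    refine ⟨_, ((toDual ℝ (EuclideanSpace ℝ (Fin N))).symm.hasFDerivAt).comp x hdu.hasFDerivAt, ?_⟩
    intro v w
    rw [ContinuousLinearMap.comp_apply]
    exact toDual_symm_apply
  have hsym : ∀ v w, F2 v w = F2 w v := fun v w => hcd.isSymmSndFDerivAt (by simp) v w
  have hGF2 : ∀ v w, ⟪w, G v⟫ = F2 v w := fun v w => (real_inner_comm _ _).trans (hGF v w)
  set A : ℝ := ⟪gradient u x, gradient u x⟫ with hAdef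
  have hA : 0 < A := by
    rw [hAdef, real_inner_self_eq_norm_sq]
    exact pow_pos (norm_pos_iff.mpr (hgrad x hx)) 2
  -- derivative of q y = ⟪g y, g y⟫
  have hq : HasFDerivAt (fun y => (⟪gradient u y, gradient u y⟫ : ℝ))
      ((fderivInnerCLM ℝ (gradient u x, gradient u x)).comp (G.prod G)) x := hg.inner ℝ hg
  have hp : HasFDerivAt (fun y => (⟪y, gradient u y⟫ : ℝ))
      ((fderivInnerCLM ℝ (x, gradient u x)).comp ((ContinuousLinearMap.id ℝ _).prod G)) x :=
    (hasFDerivAt_id x).inner ℝ hg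
  set r : ℝ := (N : ℝ) - 2 with hrdef
  have hφ := hq.rpow_const (p := r/2) (Or.inl hA.ne')
  have hh := hq.rpow_const (p := (N:ℝ)/2) (Or.inl hA.ne')
  have hf := (hp.const_mul (N:ℝ)).mul hφ
  -- rewrite the harmonicity hypothesis
  have hharm' := hharm x hx
  unfold ediv at hharm'
  rw [show (fun y => ‖gradient u y‖ ^ ((N : ℝ) - 2) • gradient u y)
      = (fun y => ((⟪gradient u y, gradient u y⟫ : ℝ) ^ (r/2)) • gradient u y) from
    funext fun y => by rw [norm_rpow_inner], (show HasFDerivAt (fun y => ((⟪gradient u y, gradient u y⟫ : ℝ) ^ (r/2)) • gradient u y) _ x from hφ.smul hg).fderiv] at hharm'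
  simp only [ContinuousLinearMap.add_apply, ContinuousLinearMap.smul_apply,
    ContinuousLinearMap.smulRight_apply, ContinuousLinearMap.comp_apply,
    ContinuousLinearMap.prod_apply, fderivInnerCLM_apply, ContinuousLinearMap.coe_id', id_eq,
    inner_add_left, real_inner_smul_left, smul_eq_mul, hGF, hGF2] at hharm'
  -- closed form of harmonicity
  have hkey : (⟪gradient u x, gradient u x⟫:ℝ) ^ (r/2) *
        (∑ i, F2 (EuclideanSpace.single i 1) (EuclideanSpace.single i 1)) +
      r * (⟪gradient u x, gradient u x⟫:ℝ) ^ (r/2-1) * F2 (gradient u x) (gradient u x) = 0 := by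
    rw [← hharm', Finset.mul_sum, ← sum_clm_single (F2 (gradient u x)) (gradient u x),
      Finset.mul_sum, ← Finset.sum_add_distrib]
    refine Finset.sum_congr rfl fun i _ => ?_
    rw [hsym (gradient u x) (EuclideanSpace.single i 1)]
    have h1 : (⟪gradient u x, EuclideanSpace.single i 1⟫:ℝ) = gradient u x i := by
      rw [EuclideanSpace.inner_single_right]; simp
    rw [h1]
    ring
  -- now the main goal
  unfold ediv
  rw [show (fun y => ((N:ℝ) * ⟪y, gradient u y⟫ * ‖gradient u y‖ ^ r) • gradient u y -
        ‖gradient u y‖ ^ (N:ℝ) • y)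
      = (fun y => ((N:ℝ) * ⟪y, gradient u y⟫ * (⟪gradient u y, gradient u y⟫:ℝ) ^ (r/2)) • gradient u y -
        ((⟪gradient u y, gradient u y⟫:ℝ) ^ ((N:ℝ)/2)) • y) from
    funext fun y => by rw [norm_rpow_inner, norm_rpow_inner]]
  have hXd : fderiv ℝ (fun y =>
      ((N:ℝ) * ⟪y, gradient u y⟫ * (⟪gradient u y, gradient u y⟫:ℝ) ^ (r / 2)) • gradient u y -
        (⟪gradient u y, gradient u y⟫:ℝ) ^ ((N:ℝ) / 2) • y) x = _ :=
    ((hf.smul hg).sub (hh.smul (hasFDerivAt_id x))).fderiv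
  rw [hXd]
  simp only [ContinuousLinearMap.add_apply, ContinuousLinearMap.smul_apply,
    ContinuousLinearMap.sub_apply, ContinuousLinearMap.smulRight_apply,
    ContinuousLinearMap.comp_apply, ContinuousLinearMap.prod_apply, fderivInnerCLM_apply,
    ContinuousLinearMap.coe_id', id_eq, inner_add_left, inner_sub_left, real_inner_smul_left,
    smul_eq_mul, hGF, hGF2, Pi.mul_apply]
  have e1 := sum_clm_single (F2 (gradient u x)) (gradient u x)
  have e2 := sum_clm_single (F2 x) (gradient u x)
  have e3 := sum_clm_single (F2 (gradient u x)) x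
  have e4 : ∑ i, gradient u x i * gradient u x i = (⟪gradient u x, gradient u x⟫:ℝ) := by
    rw [PiLp.inner_apply]; simp [RCLike.inner_apply, mul_comm, sq]
  have hQ := hA.ne'
  set Q : ℝ := ⟪gradient u x, gradient u x⟫ with hQdef
  set P : ℝ := ⟪x, gradient u x⟫ with hPdef
  have hstep : ∀ i : Fin N,
      ((N:ℝ) * P * Q ^ (r / 2) *
            (F2 (EuclideanSpace.single i 1)) (EuclideanSpace.single i 1) +
          ((N:ℝ) * P *
                (r / 2 * Q ^ (r / 2 - 1) *
                  ((F2 (EuclideanSpace.single i 1)) (gradient u x) +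
                    (F2 (EuclideanSpace.single i 1)) (gradient u x))) +
              Q ^ (r / 2) *
                ((N:ℝ) * ((F2 (EuclideanSpace.single i 1)) x +
                  ⟪EuclideanSpace.single i 1, gradient u x⟫))) *
            ⟪gradient u x, EuclideanSpace.single i 1⟫ -
        (Q ^ ((N:ℝ) / 2) * ⟪EuclideanSpace.single i (1:ℝ), EuclideanSpace.single i (1:ℝ)⟫ +
          (N:ℝ) / 2 * Q ^ ((N:ℝ) / 2 - 1) *
              ((F2 (EuclideanSpace.single i 1)) (gradient u x) +
                (F2 (EuclideanSpace.single i 1)) (gradient u x)) *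
            ⟪x, EuclideanSpace.single i 1⟫)) =
      ((N:ℝ) * P * Q ^ (r / 2)) * (F2 (EuclideanSpace.single i 1)) (EuclideanSpace.single i 1) +
        ((N:ℝ) * P * r * Q ^ (r / 2 - 1)) *
          ((F2 (gradient u x)) (EuclideanSpace.single i 1) * gradient u x i) +
        ((N:ℝ) * Q ^ (r / 2)) * ((F2 x) (EuclideanSpace.single i 1) * gradient u x i) +
        ((N:ℝ) * Q ^ (r / 2)) * (gradient u x i * gradient u x i) +
        (-((N:ℝ) * Q ^ ((N:ℝ) / 2 - 1))) * ((F2 (gradient u x)) (EuclideanSpace.single i 1) * x i) +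
        (-(Q ^ ((N:ℝ) / 2))) := by
    intro i
    have i1 : (⟪gradient u x, EuclideanSpace.single i 1⟫:ℝ) = gradient u x i := by
      rw [EuclideanSpace.inner_single_right]; simp
    have i2 : (⟪EuclideanSpace.single i 1, gradient u x⟫:ℝ) = gradient u x i := by
      rw [EuclideanSpace.inner_single_left]; simp
    have i3 : (⟪x, EuclideanSpace.single i 1⟫:ℝ) = x i := by
      simp [EuclideanSpace.inner_single_right]
    have i4 : (⟪EuclideanSpace.single i (1:ℝ), EuclideanSpace.single i (1:ℝ)⟫:ℝ) = 1 := by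
      simp [EuclideanSpace.inner_single_right, EuclideanSpace.single_apply]
    rw [i1, i2, i3, i4, hsym (EuclideanSpace.single i 1) (gradient u x),
      hsym (EuclideanSpace.single i 1) x]
    ring
  rw [Finset.sum_congr rfl fun i _ => hstep i]
  rw [Finset.sum_add_distrib, Finset.sum_add_distrib, Finset.sum_add_distrib,
    Finset.sum_add_distrib, Finset.sum_add_distrib, ← Finset.mul_sum, ← Finset.mul_sum,
    ← Finset.mul_sum, ← Finset.mul_sum, ← Finset.mul_sum, e1, e2, e3, e4, Finset.sum_const,
    Finset.card_univ, Fintype.card_fin, nsmul_eq_mul]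
  -- rpow identities
  have rp1 : Q ^ ((N:ℝ) / 2 - 1) = Q ^ (r / 2) := by
    congr 1
    rw [hrdef]; ring
  have rp2 : Q ^ ((N:ℝ) / 2) = Q ^ (r / 2) * Q := by
    rw [show (N:ℝ)/2 = r/2 + 1 from by rw [hrdef]; ring, Real.rpow_add hA, Real.rpow_one]
  have hsym2 : (F2 x) (gradient u x) = (F2 (gradient u x)) x := hsym x (gradient u x)
  rw [rp1, rp2, hsym2]
  linear_combination ((N:ℝ) * P) * hkey
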